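/- Let g : V₀ → V be an isometric embedding of finite-dimensional inner product spaces and f : V → W a linear map. Then for all λ ≥ 0, F(f)(λ) ≤ F(f ∘ g)(λ) + (dim V − dim V₀). -/

import Mathlib

open scoped RealInnerProductSpace

variable {V E : Type*}

noncomputable def c1 [Fintype E] [DecidableEq V] (v0 v1 : E → V) :
    EuclideanSpace ℝ E →ₗ[ℝ] EuclideanSpace ℝ V where
  toFun a := WithLp.toLp 2 (fun v =>
    (∑ e ∈ Finset.univ.filter (fun e => v1 e = v), a e)
      - (∑ e ∈ Finset.univ.filter (fun e => v0 e = v), a e))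
  map_add' a b := by
    ext v
    simp [PiLp.add_apply, Finset.sum_add_distrib] <;>
    ring
  map_smul' c a := by
    ext v
    simp [PiLp.smul_apply, smul_eq_mul, ← Finset.mul_sum, mul_sub] <;> ring

/-- Spectral density function of a linear map of inner product spaces. -/
noncomputable def sdf {V W : Type*} [NormedAddCommGroup V] [InnerProductSpace ℝ V]
    [NormedAddCommGroup W] [InnerProductSpace ℝ W]
    (f : V →ₗ[ℝ] W) (lam : ℝ) : ℕ :=
  sSup {n : ℕ | ∃ U : Submodule ℝ V, Module.finrank ℝ U = n ∧ ∀ v ∈ U, ‖f v‖ ≤ lam * ‖v‖}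

/-- Degree of a vertex in a finite directed multigraph (loops count twice). -/
def vdeg [Fintype E] [DecidableEq V] (v0 v1 : E → V) (v : V) : ℕ :=
  (Finset.univ.filter fun e => v0 e = v).card + (Finset.univ.filter fun e => v1 e = v).card

/-- Maximal vertex degree of a finite multigraph. -/
def maxDeg [Fintype V] [Fintype E] [DecidableEq V] (v0 v1 : E → V) : ℕ :=
  Finset.univ.sup (vdeg v0 v1)

/-- The simple graph underlying a directed multigraph. -/
def supportGraph (v0 v1 : E → V) : SimpleGraph V where
  Adj u w := u ≠ w ∧ ∃ e, (v0 e = u ∧ v1 e = w) ∨ (v0 e = w ∧ v1 e = u)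
  symm := by
    constructor
    rintro u w ⟨h, e, he⟩
    exact ⟨h.symm, e, he.symm⟩
  loopless := by constructor; rintro u ⟨h, _⟩; exact h rfl

/-- If g is an isometric embedding then F(f)(λ) ≤ F(f ∘ g)(λ) + (dim V − dim V₀). -/
theorem sdf_comp_isometry {V₀ V W : Type*}
    [NormedAddCommGroup V₀] [InnerProductSpace ℝ V₀] [FiniteDimensional ℝ V₀]
    [NormedAddCommGroup V] [InnerProductSpace ℝ V] [FiniteDimensional ℝ V]
    [NormedAddCommGroup W] [InnerProductSpace ℝ W] [FiniteDimensional ℝ W]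
    (g : V₀ →ₗ[ℝ] V) (hg : ∀ x y : V₀, ⟪g x, g y⟫ = ⟪x, y⟫)
    (f : V →ₗ[ℝ] W) (lam : ℝ) (hlam : 0 ≤ lam) :
    (sdf f lam : ℤ) ≤ (sdf (f ∘ₗ g) lam : ℤ)
      + (Module.finrank ℝ V - Module.finrank ℝ V₀ : ℤ) := by

  classical
  -- g is norm-preserving
  have hnorm : ∀ v : V₀, ‖g v‖ = ‖v‖ := by
    intro v
    have h := hg v v
    rw [real_inner_self_eq_norm_sq, real_inner_self_eq_norm_sq] at h
    have := congrArg Real.sqrt h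
    simpa [Real.sqrt_sq, norm_nonneg] using this
  -- the set for sdf f is nonempty and bounded
  set S : Set ℕ := {n : ℕ | ∃ U : Submodule ℝ V, Module.finrank ℝ U = n ∧
    ∀ v ∈ U, ‖f v‖ ≤ lam * ‖v‖} with hS
  have hne : S.Nonempty := ⟨0, ⊥, by simp, by
    intro v hv
    simp only [Submodule.mem_bot] at hv
    simp [hv]⟩
  have hbdd : BddAbove S := by
    refine ⟨Module.finrank ℝ V, ?_⟩
    rintro n ⟨U, hU, -⟩
    exact hU ▸ U.finrank_le
  have hmem : sdf f lam ∈ S := Nat.sSup_mem hne hbdd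
  obtain ⟨U, hUrank, hUprop⟩ := hmem
  -- the pullback subspace
  set U₀ : Submodule ℝ V₀ := U.comap g with hU₀
  -- rank estimate via rank-nullity
  have hq : LinearMap.ker (U.mkQ ∘ₗ g) = U₀ := by
    rw [LinearMap.ker_comp, Submodule.ker_mkQ]
  have hrn := LinearMap.finrank_range_add_finrank_ker (U.mkQ ∘ₗ g)
  rw [hq] at hrn
  have hrange : Module.finrank ℝ (LinearMap.range (U.mkQ ∘ₗ g))
      ≤ Module.finrank ℝ (V ⧸ U) := Submodule.finrank_le _
  have hquot : Module.finrank ℝ (V ⧸ U) + Module.finrank ℝ U = Module.finrank ℝ V :=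
    Submodule.finrank_quotient_add_finrank U
  -- U₀ witnesses sdf (f ∘ₗ g)
  have hmem' : Module.finrank ℝ U₀ ∈ {n : ℕ | ∃ U : Submodule ℝ V₀,
      Module.finrank ℝ U = n ∧ ∀ v ∈ U, ‖(f ∘ₗ g) v‖ ≤ lam * ‖v‖} := by
    refine ⟨U₀, rfl, ?_⟩
    intro v hv
    have : ‖f (g v)‖ ≤ lam * ‖g v‖ := hUprop (g v) hv
    simpa [LinearMap.comp_apply, hnorm v] using this
  have hbdd' : BddAbove {n : ℕ | ∃ U : Submodule ℝ V₀,
      Module.finrank ℝ U = n ∧ ∀ v ∈ U, ‖(f ∘ₗ g) v‖ ≤ lam * ‖v‖} := by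
    refine ⟨Module.finrank ℝ V₀, ?_⟩
    rintro n ⟨U, hU, -⟩
    exact hU ▸ U.finrank_le
  have hle : Module.finrank ℝ U₀ ≤ sdf (f ∘ₗ g) lam := le_csSup hbdd' hmem'
  have h1 : (Module.finrank ℝ U : ℤ) ≤ (Module.finrank ℝ U₀ : ℤ)
      + (Module.finrank ℝ V - Module.finrank ℝ V₀ : ℤ) := by
    omega
  calc (sdf f lam : ℤ) = (Module.finrank ℝ U : ℤ) := by rw [hUrank]
    _ ≤ (Module.finrank ℝ U₀ : ℤ) + (Module.finrank ℝ V - Module.finrank ℝ V₀ : ℤ) := h1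
    _ ≤ (sdf (f ∘ₗ g) lam : ℤ) + (Module.finrank ℝ V - Module.finrank ℝ V₀ : ℤ) := by
        have := hle; omega
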